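/- Let E_1,…,E_n be quantum operations on ℂ^d with Kraus operators {E_i^k} such that for every i, supp(E_i) is not contained in Σ_{j≠i} supp(E_j). Let ψ = Σ_{t=1}^d α_t |t⟩⊗|t⟩ ∈ ℂ^d ⊗ ℂ^d be any unit vector with full Schmidt number, i.e., α_t > 0 for all t, where {|t⟩} is an orthonormal basis of ℂ^d. Then the n output states (E_i ⊗ I)(|ψ⟩⟨ψ|) = Σ_k (E_i^k ⊗ I)|ψ⟩⟨ψ|(E_i^k ⊗ I)†, i = 1,…,n, are unambiguously distinguishable. -/

import Mathlib

open Matrix Kronecker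
open scoped ComplexOrder

noncomputable section

/-- A quantum operation on ℂ^d given by a finite family of Kraus operators
satisfying the completeness condition. -/
structure QuantumOp (d : ℕ) where
  m : ℕ
  K : Fin m → Matrix (Fin d) (Fin d) ℂ
  complete : ∑ k, (K k)ᴴ * K k = 1

/-- The support of a quantum operation: the span of its Kraus operators. -/
def QuantumOp.supp {d : ℕ} (E : QuantumOp d) : Submodule ℂ (Matrix (Fin d) (Fin d) ℂ) :=
  Submodule.span ℂ (Set.range E.K)

/-- The output state (E ⊗ I)(|ψ⟩⟨ψ|) = Σ_k (E^k ⊗ I)|ψ⟩⟨ψ|(E^k ⊗ I)†. -/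
def QuantumOp.output {d : ℕ} (E : QuantumOp d) (da : ℕ) (ψ : Fin d × Fin da → ℂ) :
    Matrix (Fin d × Fin da) (Fin d × Fin da) ℂ :=
  ∑ k, (E.K k ⊗ₖ (1 : Matrix (Fin da) (Fin da) ℂ)) * vecMulVec ψ (star ψ) *
    (E.K k ⊗ₖ (1 : Matrix (Fin da) (Fin da) ℂ))ᴴ

/-- States σ_1, …, σ_n are unambiguously distinguishable if there is a POVM
{Π_0, Π_1, …, Π_n} with tr(Π_i σ_j) = 0 for i ≠ j and tr(Π_i σ_i) > 0. -/
def UnambiguouslyDistinguishable {μ : Type*} [Fintype μ] [DecidableEq μ] {n : ℕ}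
    (σ : Fin n → Matrix μ μ ℂ) : Prop :=
  ∃ P0 : Matrix μ μ ℂ, ∃ P : Fin n → Matrix μ μ ℂ,
    P0.PosSemidef ∧ (∀ i, (P i).PosSemidef) ∧
    (P0 + ∑ i, P i = 1) ∧
    (∀ i j, i ≠ j → (P i * σ j).trace = 0) ∧
    (∀ i, 0 < (P i * σ i).trace)

section Helpers

set_option linter.unusedSectionVars false

variable {ι κ : Type*} [Fintype ι] [Fintype κ] [DecidableEq ι]

lemma conj_vecMulVec (B : Matrix κ ι ℂ) (u : ι → ℂ) :
    B * vecMulVec u (star u) * Bᴴ = vecMulVec (B *ᵥ u) (star (B *ᵥ u)) := by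
  ext p q
  simp only [mul_apply, vecMulVec_apply, conjTranspose_apply, mulVec, dotProduct,
    Pi.star_apply, Finset.sum_mul, Finset.mul_sum, star_sum, star_mul']
  refine Finset.sum_congr rfl fun a _ => Finset.sum_congr rfl fun b _ => by ring

lemma trace_rank_one (w v : ι → ℂ) :
    (vecMulVec w (star w) * vecMulVec v (star v)).trace
      = (star w ⬝ᵥ v) * star (star w ⬝ᵥ v) := by
  simp only [Matrix.trace, diag_apply, mul_apply, vecMulVec_apply, Pi.star_apply, dotProduct,
    star_sum, star_mul', star_star, Finset.sum_mul, Finset.mul_sum]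
  refine Finset.sum_congr rfl fun a _ => Finset.sum_congr rfl fun b _ => by ring

lemma vecMulVec_mulVec' (u v x : ι → ℂ) :
    vecMulVec u v *ᵥ x = (v ⬝ᵥ x) • u := by
  ext p
  simp [vecMulVec_apply, mulVec, dotProduct, Finset.sum_mul, Finset.mul_sum]
  exact Finset.sum_congr rfl fun a _ => by ring

lemma star_dot (w x : ι → ℂ) : star x ⬝ᵥ w = star (star w ⬝ᵥ x) := by
  simp [dotProduct, star_sum, star_mul', star_star, mul_comm]

lemma psd_vecMulVec (w : ι → ℂ) : (vecMulVec w (star w)).PosSemidef := by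
  refine Matrix.PosSemidef.of_dotProduct_mulVec_nonneg ?_ ?_
  · ext p q
    simp [vecMulVec_apply, conjTranspose_apply, mul_comm]
  · intro x
    rw [vecMulVec_mulVec', dotProduct_smul]
    have hx : star x ⬝ᵥ w = star (star w ⬝ᵥ x) := star_dot w x
    rw [smul_eq_mul, hx, Complex.star_def, Complex.mul_conj']
    positivity

lemma cs_normSq (w x : ι → ℂ) :
    Complex.normSq (star w ⬝ᵥ x) ≤ (∑ p, Complex.normSq (w p)) * (∑ p, Complex.normSq (x p)) := by
  let W : EuclideanSpace ℂ ι := (WithLp.equiv 2 _).symm w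
  let X : EuclideanSpace ℂ ι := (WithLp.equiv 2 _).symm x
  have hinner : inner ℂ W X = star w ⬝ᵥ x := by
    simp [W, X, PiLp.inner_apply, RCLike.inner_apply, dotProduct, mul_comm]
  have h := norm_inner_le_norm (𝕜 := ℂ) W X
  rw [hinner] at h
  have h2 : ‖star w ⬝ᵥ x‖ ^ 2 ≤ (‖W‖ * ‖X‖) ^ 2 := by
    apply pow_le_pow_left₀ (norm_nonneg _) h
  rw [mul_pow, EuclideanSpace.norm_eq, EuclideanSpace.norm_eq,
    Real.sq_sqrt (by positivity), Real.sq_sqrt (by positivity)] at h2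
  calc Complex.normSq (star w ⬝ᵥ x) = ‖star w ⬝ᵥ x‖ ^ 2 := by
        rw [Complex.normSq_eq_norm_sq]
    _ ≤ _ := by
        refine h2.trans_eq ?_
        congr 1 <;> exact Finset.sum_congr rfl fun p _ => by
          simp [Complex.normSq_eq_norm_sq, W, X]

lemma psd_add {M N : Matrix ι ι ℂ} (hM : M.PosSemidef) (hN : N.PosSemidef) :
    (M + N).PosSemidef := by
  refine .of_dotProduct_mulVec_nonneg (hM.1.add hN.1) fun x => ?_
  rw [add_mulVec, dotProduct_add]
  exact add_nonneg (hM.dotProduct_mulVec_nonneg x) (hN.dotProduct_mulVec_nonneg x)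

lemma psd_smul {M : Matrix ι ι ℂ} (hM : M.PosSemidef) {c : ℝ} (hc : 0 ≤ c) :
    ((c : ℂ) • M).PosSemidef := by
  refine .of_dotProduct_mulVec_nonneg ?_ fun x => ?_
  · unfold Matrix.IsHermitian
    rw [conjTranspose_smul, hM.1]
    congr 1
    simp
  · rw [smul_mulVec, dotProduct_smul, smul_eq_mul]
    exact mul_nonneg (by exact_mod_cast Complex.zero_le_real.mpr hc) (hM.dotProduct_mulVec_nonneg x)

lemma psd_scaled_sub (w : ι → ℂ) (a c : ℝ) (hc : 0 ≤ c)
    (hac : c * ∑ p, Complex.normSq (w p) ≤ a) :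
    ((a : ℂ) • (1 : Matrix ι ι ℂ) - (c : ℂ) • vecMulVec w (star w)).PosSemidef := by
  have h2 : (vecMulVec w (star w)).IsHermitian := (psd_vecMulVec w).1
  refine .of_dotProduct_mulVec_nonneg ?_ fun x => ?_
  · have h1 : ((a:ℂ) • (1 : Matrix ι ι ℂ)).IsHermitian := by
      unfold Matrix.IsHermitian
      rw [conjTranspose_smul, conjTranspose_one]
      congr 1
      exact Complex.conj_ofReal a
    have h3 : ((c:ℂ) • vecMulVec w (star w)).IsHermitian := by
      unfold Matrix.IsHermitian
      rw [conjTranspose_smul, h2]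
      congr 1
      exact Complex.conj_ofReal c
    exact h1.sub h3
  · have hxx : star x ⬝ᵥ x = ((∑ p, Complex.normSq (x p) : ℝ) : ℂ) := by
      push_cast
      simp only [dotProduct, Pi.star_apply, Complex.star_def]
      exact Finset.sum_congr rfl fun p _ => by rw [mul_comm, Complex.mul_conj]
    have hwx : (star w ⬝ᵥ x) * (star x ⬝ᵥ w) = ((Complex.normSq (star w ⬝ᵥ x) : ℝ) : ℂ) := by
      rw [star_dot w x, Complex.star_def, Complex.mul_conj]
    rw [sub_mulVec, dotProduct_sub, smul_mulVec, smul_mulVec, one_mulVec,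
      dotProduct_smul, dotProduct_smul, vecMulVec_mulVec', dotProduct_smul,
      smul_eq_mul, smul_eq_mul, smul_eq_mul, hxx, hwx]
    rw [sub_nonneg]
    have hS : (0:ℝ) ≤ ∑ p, Complex.normSq (x p) :=
      Finset.sum_nonneg fun p _ => Complex.normSq_nonneg _
    have hcs := cs_normSq w x
    have key : c * Complex.normSq (star w ⬝ᵥ x) ≤ a * ∑ p, Complex.normSq (x p) := by
      nlinarith [mul_le_mul_of_nonneg_left hcs hc, mul_le_mul_of_nonneg_right hac hS]
    calc (c:ℂ) * ((Complex.normSq (star w ⬝ᵥ x) : ℝ) : ℂ)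
        = ((c * Complex.normSq (star w ⬝ᵥ x) : ℝ) : ℂ) := by push_cast; ring
      _ ≤ ((a * ∑ p, Complex.normSq (x p) : ℝ) : ℂ) := by
          exact_mod_cast Complex.real_le_real.mpr key
      _ = (a:ℂ) * ((∑ p, Complex.normSq (x p) : ℝ) : ℂ) := by push_cast; ring

end Helpers

set_option maxHeartbeats 1000000 in
/-- if for every i, supp(E_i) is not contained in Σ_{j≠i} supp(E_j), then for
any maximally-entangled-type unit input ψ = Σ_t α_t |t⟩|t⟩ with all α_t > 0, the output
states (E_i ⊗ I)(|ψ⟩⟨ψ|) are unambiguously distinguishable. -/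
theorem outputs_unambig_of_full_schmidt {d n : ℕ} (E : Fin n → QuantumOp d)
    (h : ∀ i, ¬ ((E i).supp ≤ ⨆ j ≠ i, (E j).supp))
    (α : Fin d → ℝ) (hα : ∀ t, 0 < α t) (hunit : ∑ t, α t ^ 2 = 1)
    (ψ : Fin d × Fin d → ℂ)
    (hψ : ψ = fun p => if p.1 = p.2 then (α p.1 : ℂ) else 0) :
    UnambiguouslyDistinguishable (fun i => (E i).output d ψ) := by
  classical
  subst hψ
  rcases Nat.eq_zero_or_pos n with hn | hn
  · subst hn
    exact ⟨1, fun i => i.elim0, Matrix.PosSemidef.one, fun i => i.elim0, by simp,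
      fun i => i.elim0, fun i => i.elim0⟩
  -- dual functionals separating the supports
  have key : ∀ i : Fin n, ∃ f : Module.Dual ℂ (Matrix (Fin d) (Fin d) ℂ),
      (∀ j, j ≠ i → ∀ k, f ((E j).K k) = 0) ∧ ∃ k, f ((E i).K k) ≠ 0 := by
    intro i
    obtain ⟨B, hB1, hB2⟩ := SetLike.not_le_iff_exists.mp (h i)
    set S : Submodule ℂ (Matrix (Fin d) (Fin d) ℂ) := ⨆ j ≠ i, (E j).supp with hS
    have hq : (Submodule.Quotient.mk B : _ ⧸ S) ≠ 0 := by
      simpa [Submodule.Quotient.mk_eq_zero] using hB2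
    obtain ⟨g, hg⟩ : ∃ φ : Module.Dual ℂ (_ ⧸ S), φ (Submodule.Quotient.mk B) ≠ 0 := by
      by_contra hcon
      push_neg at hcon
      exact hq ((Module.forall_dual_apply_eq_zero_iff ℂ _).mp hcon)
    refine ⟨g.comp S.mkQ, fun j hj k => ?_, ?_⟩
    · have hmem : (E j).K k ∈ S := by
        have h1 : (E j).supp ≤ S := le_iSup_of_le j (le_iSup_of_le hj le_rfl)
        exact h1 (Submodule.subset_span ⟨k, rfl⟩)
      have : S.mkQ ((E j).K k) = 0 := (Submodule.Quotient.mk_eq_zero S).mpr hmem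
      simp [LinearMap.comp_apply, this]
    · by_contra hcon
      push_neg at hcon
      have hz : ∀ A ∈ (E i).supp, (g.comp S.mkQ) A = 0 := by
        intro A hA
        refine Submodule.span_induction ?_ ?_ ?_ ?_ hA
        · rintro _ ⟨k, rfl⟩; exact hcon k
        · simp
        · intro x y _ _ hx hy; rw [map_add, hx, hy, add_zero]
        · intro a x _ hx; rw [LinearMap.map_smul, hx, smul_zero]
      exact hg (by simpa using hz B hB1)
  choose f hf0 hfk using key
  -- the measurement vectors
  set w : Fin n → (Fin d × Fin d → ℂ) :=
    fun i p => star (f i (Matrix.single p.1 p.2 1)) * ((α p.2 : ℂ))⁻¹ with hw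
  set s : Fin n → ℝ := fun i => ∑ p, Complex.normSq (w i p) with hs
  set c : Fin n → ℝ := fun i => ((n : ℝ) * (s i + 1))⁻¹ with hc
  have hsnn : ∀ i, 0 ≤ s i := fun i => Finset.sum_nonneg fun p _ => Complex.normSq_nonneg _
  have hnpos : (0:ℝ) < (n:ℝ) := Nat.cast_pos.mpr hn
  have hcpos : ∀ i, 0 < c i := fun i => by
    have h1 : (0:ℝ) < (n:ℝ) * (s i + 1) := mul_pos hnpos (by linarith [hsnn i])
    exact inv_pos.mpr h1
  set P : Fin n → Matrix (Fin d × Fin d) (Fin d × Fin d) ℂ :=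
    fun i => ((c i : ℝ) : ℂ) • vecMulVec (w i) (star (w i)) with hP
  have hαne : ∀ t, (α t : ℂ) ≠ 0 := fun t => Complex.ofReal_ne_zero.mpr (ne_of_gt (hα t))
  -- the key contraction identity
  have hcontr : ∀ i (A : Matrix (Fin d) (Fin d) ℂ),
      star (w i) ⬝ᵥ ((A ⊗ₖ (1 : Matrix (Fin d) (Fin d) ℂ)) *ᵥ
        (fun p : Fin d × Fin d => if p.1 = p.2 then (α p.1 : ℂ) else 0)) = f i A := by
    intro i A
    have hv : ∀ p : Fin d × Fin d,
        ((A ⊗ₖ (1 : Matrix (Fin d) (Fin d) ℂ)) *ᵥ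
          (fun p : Fin d × Fin d => if p.1 = p.2 then (α p.1 : ℂ) else 0)) p
          = A p.1 p.2 * (α p.2 : ℂ) := by
      intro p
      simp only [mulVec, dotProduct, kroneckerMap_apply, one_apply, Fintype.sum_prod_type,
        mul_ite, ite_mul, mul_one, mul_zero, zero_mul, one_mul, Finset.sum_ite_eq,
        Finset.sum_ite_eq', Finset.mem_univ, if_true]
    have hfA : f i A = ∑ p : Fin d × Fin d, A p.1 p.2 * f i (Matrix.single p.1 p.2 1) := by
      calc f i A = ∑ a, ∑ b, f i (Matrix.single a b (A a b)) := by
            conv_lhs => rw [Matrix.matrix_eq_sum_single A]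
            rw [map_sum]
            exact Finset.sum_congr rfl fun a _ => map_sum _ _ _
        _ = ∑ a, ∑ b, A a b * f i (Matrix.single a b 1) := by
            refine Finset.sum_congr rfl fun a _ => Finset.sum_congr rfl fun b _ => ?_
            rw [show Matrix.single a b (A a b) = A a b • Matrix.single a b 1 by
              rw [Matrix.smul_single, smul_eq_mul, mul_one], LinearMap.map_smul,
              smul_eq_mul]
        _ = ∑ p : Fin d × Fin d, A p.1 p.2 * f i (Matrix.single p.1 p.2 1) :=
            (Fintype.sum_prod_type
              (fun p : Fin d × Fin d => A p.1 p.2 * f i (Matrix.single p.1 p.2 1))).symm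
    calc star (w i) ⬝ᵥ _ = ∑ p : Fin d × Fin d, star (w i p) * (A p.1 p.2 * (α p.2:ℂ)) := by
          rw [dotProduct]
          exact Finset.sum_congr rfl fun p _ => by rw [Pi.star_apply, hv p]
      _ = ∑ p : Fin d × Fin d, A p.1 p.2 * f i (Matrix.single p.1 p.2 1) := by
          refine Finset.sum_congr rfl fun p _ => ?_
          rw [hw]
          simp only [star_mul', star_star, star_inv₀, Complex.star_def, Complex.conj_ofReal, Complex.conj_conj]
          field_simp [hαne p.2]
      _ = f i A := hfA.symm
  -- the trace formula
  have htr : ∀ i j, ((P i) * (E j).output d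
        (fun p : Fin d × Fin d => if p.1 = p.2 then (α p.1 : ℂ) else 0)).trace
      = (c i : ℂ) * ∑ k, ((f i ((E j).K k)) * star (f i ((E j).K k))) := by
    intro i j
    have houtput : (E j).output d
          (fun p : Fin d × Fin d => if p.1 = p.2 then (α p.1 : ℂ) else 0)
        = ∑ k, vecMulVec ((((E j).K k) ⊗ₖ (1 : Matrix (Fin d) (Fin d) ℂ)) *ᵥ
            (fun p : Fin d × Fin d => if p.1 = p.2 then (α p.1 : ℂ) else 0))
          (star ((((E j).K k) ⊗ₖ (1 : Matrix (Fin d) (Fin d) ℂ)) *ᵥ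
            (fun p : Fin d × Fin d => if p.1 = p.2 then (α p.1 : ℂ) else 0))) := by
      rw [QuantumOp.output]
      exact Finset.sum_congr rfl fun k _ => conj_vecMulVec _ _
    rw [hP, houtput, Matrix.mul_sum, trace_sum, Finset.mul_sum]
    refine Finset.sum_congr rfl fun k _ => ?_
    rw [smul_mul_assoc, trace_smul, smul_eq_mul, trace_rank_one, hcontr i ((E j).K k)]
  -- assemble the POVM
  refine ⟨1 - ∑ i, P i, P, ?_, ?_, by rw [sub_add_cancel], ?_, ?_⟩
  · -- P0 is PSD
    have hne : ((n:ℝ)) ≠ 0 := ne_of_gt hnpos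
    have hsum1 : ∑ _i : Fin n, ((((n:ℝ)⁻¹ : ℝ) : ℂ) • (1 : Matrix (Fin d × Fin d) (Fin d × Fin d) ℂ)) = 1 := by
      rw [Finset.sum_const, Finset.card_univ, Fintype.card_fin, ← Nat.cast_smul_eq_nsmul ℂ,
        smul_smul]
      have : ((n:ℕ):ℂ) * (((n:ℝ)⁻¹ : ℝ) : ℂ) = 1 := by
        rw [Complex.ofReal_inv]
        push_cast
        exact mul_inv_cancel₀ (by exact_mod_cast hn.ne')
      rw [this, one_smul]
    have hdecomp : (1 : Matrix (Fin d × Fin d) (Fin d × Fin d) ℂ) - ∑ i, P i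
        = ∑ i : Fin n, (((((n:ℝ)⁻¹ : ℝ)) : ℂ) • 1 - P i) := by
      rw [Finset.sum_sub_distrib, hsum1]
    rw [hdecomp]
    refine Finset.sum_induction _ _ (fun a b ha hb => psd_add ha hb) Matrix.PosSemidef.zero ?_
    intro i _
    refine psd_scaled_sub (w i) ((n:ℝ)⁻¹) (c i) (le_of_lt (hcpos i)) ?_
    have h1 : c i * s i ≤ c i * (s i + 1) :=
      mul_le_mul_of_nonneg_left (by linarith) (le_of_lt (hcpos i))
    have h2 : c i * (s i + 1) = (n:ℝ)⁻¹ := by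
      rw [hc]
      have hs1 : s i + 1 ≠ 0 := ne_of_gt (by linarith [hsnn i])
      field_simp
    calc c i * ∑ p, Complex.normSq (w i p) = c i * s i := by rw [hs]
      _ ≤ c i * (s i + 1) := h1
      _ = (n:ℝ)⁻¹ := h2
  · intro i
    exact psd_smul (psd_vecMulVec (w i)) (le_of_lt (hcpos i))
  · intro i j hij
    rw [show ((fun i => (E i).output d
        (fun p : Fin d × Fin d => if p.1 = p.2 then (α p.1 : ℂ) else 0)) j)
      = (E j).output d (fun p : Fin d × Fin d => if p.1 = p.2 then (α p.1 : ℂ) else 0) from rfl,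
      htr i j]
    have hz : ∀ k, f i ((E j).K k) = 0 := hf0 i j (Ne.symm hij)
    simp [hz]
  · intro i
    rw [show ((fun i => (E i).output d
        (fun p : Fin d × Fin d => if p.1 = p.2 then (α p.1 : ℂ) else 0)) i)
      = (E i).output d (fun p : Fin d × Fin d => if p.1 = p.2 then (α p.1 : ℂ) else 0) from rfl,
      htr i i]
    have hsum : ∑ k, (f i ((E i).K k) * star (f i ((E i).K k)))
        = ((∑ k, Complex.normSq (f i ((E i).K k)) : ℝ) : ℂ) := by
      push_cast
      exact Finset.sum_congr rfl fun k _ => by rw [Complex.star_def, Complex.mul_conj]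
    rw [hsum]
    have hpos : 0 < ∑ k, Complex.normSq (f i ((E i).K k)) := by
      obtain ⟨k0, hk0⟩ := hfk i
      exact Finset.sum_pos' (fun k _ => Complex.normSq_nonneg _)
        ⟨k0, Finset.mem_univ _, Complex.normSq_pos.mpr hk0⟩
    calc (0:ℂ) < (((c i) * ∑ k, Complex.normSq (f i ((E i).K k)) : ℝ) : ℂ) := by
          exact_mod_cast Complex.zero_lt_real.mpr (mul_pos (hcpos i) hpos)
      _ = (c i : ℂ) * ((∑ k, Complex.normSq (f i ((E i).K k)) : ℝ) : ℂ) := by push_cast; ring
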